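/- If β ≥ ζ, then the derivative of f̄(z) = βu₀/r - (1/r)(θ₂(u₀)e^{θ₁(u₀)z} + θ₁(u₀)e^{-θ₂(u₀)z})/((θ₁(u₀)+θ₂(u₀))e^{θ₁(u₀)d}) satisfies f̄'(z) ≥ -β for all z ∈ [0,d], and the derivative of ḡ(z) = (βu₀-1)/r + (1/r)θ₁(u₀)(e^{θ₁(u₀)d}-e^{-θ₂(u₀)d})/((θ₁(u₀)+θ₂(u₀))e^{θ₁(u₀)d})·e^{-θ₂(u₀)(z-d)} satisfies ḡ'(z) ≥ -β for all z ≥ d. -/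

import Mathlib

open Real Set

noncomputable def th1 (μ σ r u : ℝ) : ℝ := (Real.sqrt ((μ - u)^2 + 2*r*σ^2) + (μ - u)) / σ^2
noncomputable def th2 (μ σ r u : ℝ) : ℝ := (Real.sqrt ((μ - u)^2 + 2*r*σ^2) - (μ - u)) / σ^2

noncomputable def fbar (μ σ r d u₀ β z : ℝ) : ℝ :=
  β * u₀ / r - (1/r) * (th2 μ σ r u₀ * Real.exp (th1 μ σ r u₀ * z) + th1 μ σ r u₀ * Real.exp (-(th2 μ σ r u₀) * z)) /
    ((th1 μ σ r u₀ + th2 μ σ r u₀) * Real.exp (th1 μ σ r u₀ * d))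

noncomputable def gbar (μ σ r d u₀ β z : ℝ) : ℝ :=
  (β * u₀ - 1) / r + (1/r) * (th1 μ σ r u₀ * (Real.exp (th1 μ σ r u₀ * d) - Real.exp (-(th2 μ σ r u₀) * d)) /
    ((th1 μ σ r u₀ + th2 μ σ r u₀) * Real.exp (th1 μ σ r u₀ * d))) * Real.exp (-(th2 μ σ r u₀) * (z - d))

noncomputable def zeta (μ σ r d u₀ : ℝ) : ℝ :=
  th1 μ σ r u₀ * th2 μ σ r u₀ * (Real.exp (th1 μ σ r u₀ * d) - Real.exp (-(th2 μ σ r u₀) * d)) /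
    (r * (th1 μ σ r u₀ + th2 μ σ r u₀) * Real.exp (th1 μ σ r u₀ * d))

lemma th1_pos (μ σ r u : ℝ) (hσ : 0 < σ) (hr : 0 < r) : 0 < th1 μ σ r u := by
  have h2 : 0 < 2*r*σ^2 := by positivity
  have hlt : |μ - u| < Real.sqrt ((μ - u)^2 + 2*r*σ^2) := by
    rw [← Real.sqrt_sq_eq_abs]
    exact Real.sqrt_lt_sqrt (sq_nonneg _) (by linarith)
  have := abs_lt.mp hlt
  unfold th1
  have : 0 < Real.sqrt ((μ - u)^2 + 2*r*σ^2) + (μ - u) := by linarith [this.1]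
  positivity

lemma th2_pos (μ σ r u : ℝ) (hσ : 0 < σ) (hr : 0 < r) : 0 < th2 μ σ r u := by
  have h2 : 0 < 2*r*σ^2 := by positivity
  have hlt : |μ - u| < Real.sqrt ((μ - u)^2 + 2*r*σ^2) := by
    rw [← Real.sqrt_sq_eq_abs]
    exact Real.sqrt_lt_sqrt (sq_nonneg _) (by linarith)
  have := abs_lt.mp hlt
  unfold th2
  have : 0 < Real.sqrt ((μ - u)^2 + 2*r*σ^2) - (μ - u) := by linarith [this.2]
  positivity

lemma exp_lin_hasDerivAt (a z : ℝ) :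
    HasDerivAt (fun z => Real.exp (a * z)) (a * Real.exp (a * z)) z := by
  have := (HasDerivAt.exp ((hasDerivAt_id z).const_mul a))
  simpa [mul_comm] using this

theorem stmt9 (μ σ r d u₀ β : ℝ) (hσ : 0 < σ) (hr : 0 < r) (hd : 0 < d) (hu₀ : 0 < u₀)
    (hβ : 0 < β) (hβζ : β ≥ zeta μ σ r d u₀) :
    (∀ z ∈ Set.Icc 0 d, deriv (fbar μ σ r d u₀ β) z ≥ -β) ∧
    (∀ z ≥ d, deriv (gbar μ σ r d u₀ β) z ≥ -β) := by
  set t1 := th1 μ σ r u₀ with ht1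
  set t2 := th2 μ σ r u₀ with ht2
  have ht1p : 0 < t1 := th1_pos μ σ r u₀ hσ hr
  have ht2p : 0 < t2 := th2_pos μ σ r u₀ hσ hr
  set C := (t1 + t2) * Real.exp (t1 * d) with hC
  have hCp : 0 < C := by positivity
  have hEd : Real.exp (-t2 * d) ≤ Real.exp (t1 * d) := by
    apply Real.exp_le_exp.mpr; nlinarith
  have hzeta : zeta μ σ r d u₀ = t1 * t2 * (Real.exp (t1 * d) - Real.exp (-t2 * d)) / (r * C) := by
    unfold zeta; rw [hC, ← ht1, ← ht2]; ring_nf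
  have hzeta_nonneg : 0 ≤ zeta μ σ r d u₀ := by
    rw [hzeta]
    have : 0 ≤ Real.exp (t1 * d) - Real.exp (-t2 * d) := by linarith
    positivity
  constructor
  · intro z hz
    obtain ⟨hz0, hzd⟩ := hz
    have hdf : HasDerivAt (fbar μ σ r d u₀ β)
        (0 - 1/r * ((t2 * (t1 * Real.exp (t1 * z)) + t1 * (-t2 * Real.exp (-t2 * z))) / C)) z := by
      have h1 := exp_lin_hasDerivAt t1 z
      have h2 := exp_lin_hasDerivAt (-t2) z
      have := (((h1.const_mul t2).add (h2.const_mul t1)).div_const C).const_mul (1/r)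
      have hD := (hasDerivAt_const z (β * u₀ / r)).sub this
      have hfun : fbar μ σ r d u₀ β
          = fun x => β * u₀ / r - 1/r * ((t2 * Real.exp (t1 * x) + t1 * Real.exp (-t2 * x)) / C) := by
        funext x; unfold fbar; rw [← ht1, ← ht2, ← hC]; ring
      rw [hfun]; exact hD
    rw [hdf.deriv]
    have hkey : t1 * t2 * (Real.exp (t1 * z) - Real.exp (-t2 * z)) / (r * C)
        ≤ t1 * t2 * (Real.exp (t1 * d) - Real.exp (-t2 * d)) / (r * C) := by
      have e1 : Real.exp (t1 * z) ≤ Real.exp (t1 * d) := Real.exp_le_exp.mpr (by nlinarith)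
      have e2 : Real.exp (-t2 * d) ≤ Real.exp (-t2 * z) := Real.exp_le_exp.mpr (by nlinarith)
      have hnum : Real.exp (t1 * z) - Real.exp (-t2 * z)
          ≤ Real.exp (t1 * d) - Real.exp (-t2 * d) := by linarith
      have := mul_le_mul_of_nonneg_left hnum (by positivity : (0:ℝ) ≤ t1 * t2)
      exact (div_le_div_iff_of_pos_right (by positivity : (0:ℝ) < r * C)).mpr (by linarith)
    have heq : 0 - 1/r * ((t2 * (t1 * Real.exp (t1 * z)) + t1 * (-t2 * Real.exp (-t2 * z))) / C)
        = -(t1 * t2 * (Real.exp (t1 * z) - Real.exp (-t2 * z)) / (r * C)) := by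
      field_simp; ring
    rw [heq, ge_iff_le]
    rw [hzeta] at hβζ
    linarith
  · intro z hz
    have hdg : HasDerivAt (gbar μ σ r d u₀ β)
        (0 + 1/r * (t1 * (Real.exp (t1 * d) - Real.exp (-t2 * d)) / C)
          * (-t2 * Real.exp (-t2 * (z - d)))) z := by
      have hin : HasDerivAt (fun z : ℝ => -t2 * (z - d)) (-t2) z := by
        simpa using ((hasDerivAt_id z).sub_const d).const_mul (-t2)
      have hexp := hin.exp
      have := (hexp.const_mul ((1/r) * (t1 * (Real.exp (t1 * d) - Real.exp (-t2 * d)) / C)))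
      have := (hasDerivAt_const z ((β * u₀ - 1) / r)).add this
      rw [show (-t2 * Real.exp (-t2 * (z - d))) = Real.exp (-t2 * (z - d)) * -t2 by ring]
      exact this
    rw [hdg.deriv]
    have hE : Real.exp (-t2 * (z - d)) ≤ 1 := by
      rw [Real.exp_le_one_iff]; nlinarith
    have hEpos : 0 < Real.exp (-t2 * (z - d)) := Real.exp_pos _
    have heq : 0 + 1/r * (t1 * (Real.exp (t1 * d) - Real.exp (-t2 * d)) / C)
          * (-t2 * Real.exp (-t2 * (z - d)))
        = -(zeta μ σ r d u₀ * Real.exp (-t2 * (z - d))) := by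
      rw [hzeta]; field_simp; ring
    rw [heq, ge_iff_le, neg_le_neg_iff]
    calc zeta μ σ r d u₀ * Real.exp (-t2 * (z - d)) ≤ zeta μ σ r d u₀ * 1 :=
          mul_le_mul_of_nonneg_left hE hzeta_nonneg
      _ ≤ β := by linarith
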